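/- For all nonnegative integers n and x with x ≥ n, one has B_{x,x-n} = Σ_{u=0}^{n} C(n+x, n-u) · C(n-x, n+u) · A_{n+u,u}, where C(a, b) for an integer a (possibly negative) and a nonnegative integer b denotes the generalized binomial coefficient a(a-1)⋯(a-b+1)/b!. -/

import Mathlib

/-- Unsigned Stirling numbers of the first kind (cycle Stirling numbers). -/
def stirling1 : ℕ → ℕ → ℕ
  | 0, 0 => 1
  | 0, _ + 1 => 0
  | _ + 1, 0 => 0
  | n + 1, k + 1 => n * stirling1 n (k + 1) + stirling1 n k

/-- Stirling numbers of the second kind (partition Stirling numbers). -/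
def stirling2 : ℕ → ℕ → ℕ
  | 0, 0 => 1
  | 0, _ + 1 => 0
  | _ + 1, 0 => 0
  | n + 1, k + 1 => (k + 1) * stirling2 n (k + 1) + stirling2 n k

/-- Generalized binomial coefficient with integer top: `C(a,b) = a(a-1)⋯(a-b+1)/b!`. -/
def intChoose (a : ℤ) (b : ℕ) : ℚ :=
  (∏ i ∈ Finset.range b, ((a : ℚ) - i)) / b.factorial

/-- Bernoulli–Stirling numbers of the first kind. -/
def bsA (n k : ℕ) : ℚ :=
  ∑ h ∈ Finset.range (n + 1),
    bernoulli h * intChoose ((k : ℤ) + h - 1) h * stirling1 n (h + k) * (n : ℚ) ^ h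

/-- Bernoulli–Stirling numbers of the second kind. -/
def bsB (n k : ℕ) : ℚ :=
  ∑ h ∈ Finset.range (n + 1),
    bernoulli h * (n.choose h) * stirling2 (n - h) k * (k : ℚ) ^ h

namespace BS

lemma stirling1_zero_left : ∀ k, stirling1 0 k = if k = 0 then 1 else 0
  | 0 => rfl
  | _ + 1 => rfl

lemma stirling2_zero_left : ∀ k, stirling2 0 k = if k = 0 then 1 else 0
  | 0 => rfl
  | _ + 1 => rfl

lemma stirling1_zero_right (n : ℕ) (hn : n ≠ 0) : stirling1 n 0 = 0 := by
  cases n with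
  | zero => simp at hn
  | succ m => rfl

lemma stirling2_zero_right (n : ℕ) (hn : n ≠ 0) : stirling2 n 0 = 0 := by
  cases n with
  | zero => simp at hn
  | succ m => rfl

lemma stirling1_eq_zero : ∀ {n k : ℕ}, n < k → stirling1 n k = 0
  | 0, k, h => by rw [stirling1_zero_left]; simp; omega
  | n + 1, k + 1, h => by
      show n * stirling1 n (k + 1) + stirling1 n k = 0
      rw [stirling1_eq_zero (by omega), stirling1_eq_zero (by omega)]
      simp

lemma stirling2_eq_zero : ∀ {n k : ℕ}, n < k → stirling2 n k = 0
  | 0, k, h => by rw [stirling2_zero_left]; simp; omega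
  | n + 1, k + 1, h => by
      show (k + 1) * stirling2 n (k + 1) + stirling2 n k = 0
      rw [stirling2_eq_zero (by omega), stirling2_eq_zero (by omega)]
      simp

lemma stirling1_self : ∀ n, stirling1 n n = 1
  | 0 => rfl
  | n + 1 => by
      show n * stirling1 n (n + 1) + stirling1 n n = 1
      rw [stirling1_eq_zero (by omega), stirling1_self n]; simp

lemma stirling2_self : ∀ n, stirling2 n n = 1
  | 0 => rfl
  | n + 1 => by
      show (n + 1) * stirling2 n (n + 1) + stirling2 n n = 1
      rw [stirling2_eq_zero (by omega), stirling2_self n]; simp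

/-- `chQ x b = x(x-1)⋯(x-b+1)/b!` as a function on `ℚ`. -/
def chQ (x : ℚ) (b : ℕ) : ℚ := (∏ i ∈ Finset.range b, (x - i)) / b.factorial

lemma intChoose_eq_chQ (a : ℤ) (b : ℕ) : intChoose a b = chQ a b := rfl

lemma prod_range_eq_descPochhammer (x : ℚ) (b : ℕ) :
    ∏ i ∈ Finset.range b, (x - i) = (descPochhammer ℚ b).eval x := by
  induction b with
  | zero => simp
  | succ b ih => rw [Finset.prod_range_succ, ih, descPochhammer_succ_eval]

lemma chQ_nat (m b : ℕ) : chQ m b = m.choose b := by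
  rw [chQ, prod_range_eq_descPochhammer, descPochhammer_eval_eq_descFactorial,
    Nat.descFactorial_eq_factorial_mul_choose]
  push_cast
  rw [mul_comm, mul_div_assoc, div_self (by positivity), mul_one]

lemma chQ_neg (u : ℕ) (h : ℕ) : chQ (-(u : ℚ)) h = (-1) ^ h * chQ ((u : ℚ) + h - 1) h := by
  rw [chQ, chQ, ← Finset.prod_range_reflect, mul_comm ((-1:ℚ)^h), div_mul_eq_mul_div]
  congr 1
  rw [show ((-1 : ℚ))^h = ∏ _i ∈ Finset.range h, (-1 : ℚ) by simp, ← Finset.prod_mul_distrib]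
  apply Finset.prod_congr rfl
  intro i hi
  simp only [Finset.mem_range] at hi
  have : ((h - 1 - i : ℕ) : ℚ) = (h : ℚ) - 1 - i := by
    have : h - 1 - i = h - (i + 1) := by omega
    rw [this, Nat.cast_sub (by omega)]
    push_cast; ring
  rw [this]
  ring

end BS

namespace BS

/-- Discrete antiderivative anchored at 0: `cumul g x = ∑_{0 ≤ i < x} g i` (signed). -/
def cumul (g : ℤ → ℚ) (x : ℤ) : ℚ :=
  if 0 ≤ x then ∑ i ∈ Finset.range x.toNat, g i
  else -∑ i ∈ Finset.range (-x).toNat, g (-(i + 1))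

lemma cumul_zero (g : ℤ → ℚ) : cumul g 0 = 0 := by simp [cumul]

lemma cumul_succ (g : ℤ → ℚ) (x : ℤ) : cumul g (x + 1) = cumul g x + g x := by
  rcases le_or_gt 0 x with hx | hx
  · rw [cumul, cumul, if_pos hx, if_pos (by omega)]
    have : (x + 1).toNat = x.toNat + 1 := by omega
    rw [this, Finset.sum_range_succ]
    congr 2
    omega
  · rcases le_or_gt 0 (x + 1) with hx1 | hx1
    · have hx0 : x = -1 := by omega
      subst hx0
      simp [cumul]
    · simp only [cumul]
      rw [if_neg (show ¬ 0 ≤ x + 1 by omega), if_neg (show ¬ 0 ≤ x by omega)]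
      have h1 : (-x).toNat = (-(x + 1)).toNat + 1 := by omega
      rw [h1, Finset.sum_range_succ]
      have h2 : -(((-(x + 1)).toNat : ℤ) + 1) = x := by omega
      rw [h2]
      ring

lemma funext_of_delta {f g : ℤ → ℚ} (h0 : f 0 = g 0)
    (hd : ∀ x : ℤ, f (x + 1) - f x = g (x + 1) - g x) : ∀ x, f x = g x := by
  intro x
  induction x using Int.induction_on with
  | zero => exact h0
  | succ k ih => have := hd k; push_cast at *; linarith
  | pred k ih =>
      have := hd (-(k + 1 : ℤ))
      have h2 : (-(k+1:ℤ) + 1) = -k := by ring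
      rw [h2] at this
      have h3 : (-(k:ℤ) - 1) = -((k:ℤ) + 1) := by ring
      rw [h3]
      push_cast at *
      linarith

/-- Polynomial extension of the diagonal Stirling numbers of the second kind. -/
def Pf : ℕ → ℤ → ℚ
  | 0 => fun _ => 1
  | j + 1 => cumul fun t => ((t : ℚ) + 1 - (j + 1)) * Pf j t

/-- Polynomial extension of the diagonal Stirling numbers of the first kind. -/
def Qf : ℕ → ℤ → ℚ
  | 0 => fun _ => 1
  | j + 1 => cumul fun t => (t : ℚ) * Qf j t

lemma Pf_zero (j : ℕ) (hj : j ≠ 0) : Pf j 0 = 0 := by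
  cases j with
  | zero => simp at hj
  | succ m => exact cumul_zero _

lemma Qf_zero (j : ℕ) (hj : j ≠ 0) : Qf j 0 = 0 := by
  cases j with
  | zero => simp at hj
  | succ m => exact cumul_zero _

lemma Pf_succ (j : ℕ) (x : ℤ) :
    Pf (j + 1) (x + 1) = Pf (j + 1) x + ((x : ℚ) + 1 - (j + 1)) * Pf j x :=
  cumul_succ _ x

lemma Qf_succ (j : ℕ) (x : ℤ) :
    Qf (j + 1) (x + 1) = Qf (j + 1) x + (x : ℚ) * Qf j x :=
  cumul_succ _ x

lemma Pf_nat : ∀ (j m : ℕ), 1 ≤ m ∨ j = 0 → Pf j (m : ℤ) = stirling2 m (m - j)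
  | 0, m, _ => by simp [Pf, Nat.sub_zero, stirling2_self]
  | j + 1, m, hm => by
      induction m with
      | zero => omega
      | succ m ih =>
          have hstep : Pf (j + 1) ((m : ℤ) + 1) =
              Pf (j + 1) (m : ℤ) + ((m : ℚ) + 1 - (j + 1)) * Pf j (m : ℤ) := Pf_succ j m
          rcases Nat.eq_zero_or_pos m with hm0 | hm0
          · subst hm0
            rw [show ((0 + 1 : ℕ) : ℤ) = (0 : ℤ) + 1 by norm_num, Pf_succ,
              Pf_zero (j + 1) (by omega)]
            have h1 : 0 + 1 - (j + 1) = 0 := by omega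
            rw [h1, stirling2_zero_right (0 + 1) (by omega)]
            rcases Nat.eq_zero_or_pos j with hj0 | hj0
            · subst hj0
              show (0 : ℚ) + ((0 : ℚ) + 1 - ((0 : ℕ) + 1)) * Pf 0 0 = _
              push_cast
              ring
            · rw [Pf_zero j (by omega)]
              push_cast
              ring
          · have hPj : Pf j (m : ℤ) = stirling2 m (m - j) := Pf_nat j m (Or.inl hm0)
            have hP : Pf (j + 1) (m : ℤ) = stirling2 m (m - (j + 1)) := ih (Or.inl hm0)
            have hcast : ((m : ℤ) + 1) = ((m + 1 : ℕ) : ℤ) := by push_cast; ring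
            rw [hcast] at hstep
            rw [hstep, hPj, hP]
            rcases le_or_gt (j + 1) m with hle | hlt
            · -- main case: genuine recurrence
              obtain ⟨k, hk⟩ : ∃ k, m - j = k + 1 := ⟨m - j - 1, by omega⟩
              have h1 : m + 1 - (j + 1) = k + 1 := by omega
              have h2 : m - (j + 1) = k := by omega
              rw [hk, h1, h2]
              have : stirling2 (m + 1) (k + 1) = (k + 1) * stirling2 m (k + 1) + stirling2 m k :=
                rfl
              rw [this]
              have hq : ((m : ℚ) + 1 - (j + 1)) = ((k : ℚ) + 1) := by
                have : m = j + k + 1 := by omega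
                subst this; push_cast; ring
              rw [hq]
              push_cast
              ring
            · -- degenerate case: everything is 0
              have h1 : m + 1 - (j + 1) = 0 := by omega
              have h2 : m - (j + 1) = 0 := by omega
              rw [h1, h2, stirling2_zero_right (m + 1) (by omega),
                stirling2_zero_right m (by omega)]
              rcases eq_or_lt_of_le (show 1 ≤ m from hm0) with hm1 | hm1
              all_goals rcases Nat.lt_or_ge m j with hmj | hmj
              · have : m - j = 0 := by omega
                rw [this, stirling2_zero_right m (by omega)]
                push_cast; ring
              · have : m = j := by omega
                subst this
                push_cast; ring
              · have : m - j = 0 := by omega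
                rw [this, stirling2_zero_right m (by omega)]
                push_cast; ring
              · have : m = j := by omega
                subst this
                push_cast; ring

lemma Qf_nat : ∀ (j m : ℕ), 1 ≤ m ∨ j = 0 → Qf j (m : ℤ) = stirling1 m (m - j)
  | 0, m, _ => by simp [Qf, Nat.sub_zero, stirling1_self]
  | j + 1, m, hm => by
      induction m with
      | zero => omega
      | succ m ih =>
          have hstep : Qf (j + 1) ((m : ℤ) + 1) =
              Qf (j + 1) (m : ℤ) + (m : ℚ) * Qf j (m : ℤ) := Qf_succ j m
          rcases Nat.eq_zero_or_pos m with hm0 | hm0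
          · subst hm0
            rw [show ((0 + 1 : ℕ) : ℤ) = (0 : ℤ) + 1 by norm_num, Qf_succ,
              Qf_zero (j + 1) (by omega)]
            have h1 : 0 + 1 - (j + 1) = 0 := by omega
            rw [h1, stirling1_zero_right (0 + 1) (by omega)]
            push_cast
            ring
          · have hQj : Qf j (m : ℤ) = stirling1 m (m - j) := Qf_nat j m (Or.inl hm0)
            have hQ : Qf (j + 1) (m : ℤ) = stirling1 m (m - (j + 1)) := ih (Or.inl hm0)
            have hcast : ((m : ℤ) + 1) = ((m + 1 : ℕ) : ℤ) := by push_cast; ring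
            rw [hcast] at hstep
            rw [hstep, hQj, hQ]
            rcases le_or_gt (j + 1) m with hle | hlt
            · obtain ⟨k, hk⟩ : ∃ k, m - j = k + 1 := ⟨m - j - 1, by omega⟩
              have h1 : m + 1 - (j + 1) = k + 1 := by omega
              have h2 : m - (j + 1) = k := by omega
              rw [hk, h1, h2]
              have : stirling1 (m + 1) (k + 1) = m * stirling1 m (k + 1) + stirling1 m k := rfl
              rw [this]
              push_cast
              ring
            · have h1 : m + 1 - (j + 1) = 0 := by omega
              have h2 : m - (j + 1) = 0 := by omega
              have h3 : m - j = 0 := by omega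
              rw [h1, h2, h3, stirling1_zero_right (m + 1) (by omega),
                stirling1_zero_right m (by omega)]
              push_cast; ring

/-- Duality between the two diagonal families. -/
lemma Qf_eq_Pf : ∀ (j : ℕ) (x : ℤ), Qf j x = Pf j ((j : ℤ) - x)
  | 0, x => rfl
  | j + 1, x => by
      have := funext_of_delta (f := Qf (j + 1)) (g := fun x => Pf (j + 1) (((j : ℤ) + 1) - x))
        ?_ ?_ x
      · simpa using this
      · rw [Qf_zero (j + 1) (by omega)]
        show (0 : ℚ) = Pf (j + 1) ((j : ℤ) + 1 - 0)
        have hcast : ((j : ℤ) + 1 - 0) = ((j + 1 : ℕ) : ℤ) := by push_cast; ring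
        rw [hcast, Pf_nat (j + 1) (j + 1) (Or.inl (by omega))]
        rw [Nat.sub_self, stirling2_zero_right (j + 1) (by omega)]
        simp
      · intro x
        rw [Qf_succ j x]
        show Qf (j + 1) x + (x : ℚ) * Qf j x - Qf (j + 1) x =
          Pf (j + 1) ((j : ℤ) + 1 - (x + 1)) - Pf (j + 1) ((j : ℤ) + 1 - x)
        have h1 : (j : ℤ) + 1 - x = ((j : ℤ) + 1 - (x + 1)) + 1 := by ring
        rw [h1, Pf_succ j ((j : ℤ) + 1 - (x + 1))]
        have h2 : (j : ℤ) + 1 - (x + 1) = (j : ℤ) - x := by ring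
        rw [h2, Qf_eq_Pf j x]
        push_cast
        ring

end BS

namespace BS

/-- The Bernoulli-twisted diagonal function. -/
def Df (n : ℕ) (x : ℤ) : ℚ :=
  ∑ h ∈ Finset.range (n + 1),
    bernoulli h * chQ (x : ℚ) h * Pf (n - h) (x - h) * ((x : ℚ) - n) ^ h

lemma Df_nat (n x : ℕ) (hx : n ≤ x) : Df n (x : ℤ) = bsB x (x - n) := by
  rw [bsB, Df]
  rw [← Finset.sum_subset (Finset.range_subset_range.2 (by omega : n + 1 ≤ x + 1))]
  · apply Finset.sum_congr rfl
    intro h hh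
    simp only [Finset.mem_range] at hh
    simp only [Int.cast_natCast]
    have hhn : h ≤ n := by omega
    have e1 : chQ (x : ℚ) h = (x.choose h : ℚ) := chQ_nat x h
    have e2 : Pf (n - h) ((x : ℤ) - h) = (stirling2 (x - h) (x - n) : ℚ) := by
      have h1 : ((x : ℤ) - h) = ((x - h : ℕ) : ℤ) := by omega
      rw [h1, Pf_nat (n - h) (x - h) (by omega)]
      have h2 : x - h - (n - h) = x - n := by omega
      rw [h2]
    have e3 : ((x : ℚ) - n) = ((x - n : ℕ) : ℚ) := by
      rw [Nat.cast_sub hx]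
    rw [e1, e2, e3]
  · intro h hh hnot
    simp only [Finset.mem_range] at hh hnot
    have h1 : x - h < x - n := by omega
    rw [stirling2_eq_zero h1]
    push_cast
    ring

lemma Df_neg (n u : ℕ) : Df n (-(u : ℤ)) = bsA (n + u) u := by
  rw [bsA, Df]
  rw [← Finset.sum_subset (Finset.range_subset_range.2 (by omega : n + 1 ≤ n + u + 1))]
  · apply Finset.sum_congr rfl
    intro h hh
    simp only [Finset.mem_range] at hh
    simp only [Int.cast_neg, Int.cast_natCast]
    have hhn : h ≤ n := by omega
    have e1 : chQ (-(u : ℚ)) h = (-1) ^ h * chQ ((u : ℚ) + h - 1) h := chQ_neg u h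
    have e2 : intChoose ((u : ℤ) + h - 1) h = chQ ((u : ℚ) + h - 1) h := by
      rw [intChoose_eq_chQ]
      congr 1
      push_cast
      ring
    have e3 : Pf (n - h) (-(u : ℤ) - h) = (stirling1 (n + u) (h + u) : ℚ) := by
      have hh1 : (-(u : ℤ) - h) = ((n - h : ℕ) : ℤ) - ((n + u : ℕ) : ℤ) := by
        push_cast [Nat.cast_sub hhn]
        ring
      rw [hh1, ← Qf_eq_Pf (n - h) ((n + u : ℕ) : ℤ), Qf_nat (n - h) (n + u) (by omega)]
      have h2 : n + u - (n - h) = h + u := by omega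
      rw [h2]
    have e4 : (-(u : ℚ) - n) ^ h = (-1) ^ h * ((n + u : ℕ) : ℚ) ^ h := by
      rw [← mul_pow]
      congr 1
      push_cast
      ring
    rw [e1, e3, e4, e2]
    have : ((-1 : ℚ)) ^ h * (-1) ^ h = 1 := by rw [← mul_pow]; norm_num
    calc bernoulli h * ((-1) ^ h * chQ ((u : ℚ) + h - 1) h) * (stirling1 (n + u) (h + u) : ℚ) *
          ((-1) ^ h * ((n + u : ℕ) : ℚ) ^ h)
        = ((-1 : ℚ)) ^ h * (-1) ^ h * (bernoulli h * chQ ((u : ℚ) + h - 1) h *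
            (stirling1 (n + u) (h + u) : ℚ) * ((n + u : ℕ) : ℚ) ^ h) := by ring
      _ = _ := by rw [this]; ring
  · intro h hh hnot
    simp only [Finset.mem_range] at hh hnot
    rw [stirling1_eq_zero (show n + u < h + u by omega)]
    push_cast
    ring

lemma Df_root (n m : ℕ) (hm : 1 ≤ m) (hmn : m ≤ n) : Df n (m : ℤ) = 0 := by
  rw [Df]
  apply Finset.sum_eq_zero
  intro h hh
  simp only [Finset.mem_range] at hh
  simp only [Int.cast_natCast]
  have hhn : h ≤ n := by omega
  rcases lt_or_ge m h with hlt | hle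
  · rw [chQ_nat, Nat.choose_eq_zero_of_lt hlt]
    push_cast
    ring
  · rcases eq_or_lt_of_le hle with heq | hlt2
    · subst heq
      rcases eq_or_lt_of_le hmn with heq2 | hlt3
      · subst heq2
        rw [show ((h:ℚ) - (h:ℕ)) = 0 from sub_self _, zero_pow (show h ≠ 0 by omega)]
        ring
      · have : ((h : ℤ) - h) = 0 := by ring
        rw [this, Pf_zero (n - h) (by omega)]
        ring
    · have h1 : ((m : ℤ) - h) = ((m - h : ℕ) : ℤ) := by omega
      rw [h1, Pf_nat (n - h) (m - h) (by omega)]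
      have h2 : m - h - (n - h) = 0 := by omega
      rw [h2, stirling2_zero_right (m - h) (by omega)]
      push_cast
      ring

end BS

namespace BS

open Polynomial

/-- `f : ℤ → ℚ` is (the restriction of) a polynomial of degree at most `d`. -/
def IsPD (d : ℕ) (f : ℤ → ℚ) : Prop :=
  ∃ p : Polynomial ℚ, p.natDegree ≤ d ∧ ∀ x : ℤ, f x = p.eval (x : ℚ)

lemma IsPD.mono {d e : ℕ} {f : ℤ → ℚ} (h : IsPD d f) (hde : d ≤ e) : IsPD e f := by
  obtain ⟨p, hp, he⟩ := h
  exact ⟨p, hp.trans hde, he⟩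

lemma isPD_const (d : ℕ) (c : ℚ) : IsPD d (fun _ => c) :=
  ⟨C c, by simp, by simp⟩

lemma isPD_X : IsPD 1 (fun x : ℤ => (x : ℚ)) :=
  ⟨X, by simp, by simp⟩

lemma IsPD.add {d : ℕ} {f g : ℤ → ℚ} (hf : IsPD d f) (hg : IsPD d g) :
    IsPD d (fun x => f x + g x) := by
  obtain ⟨p, hp, hep⟩ := hf
  obtain ⟨q, hq, heq⟩ := hg
  exact ⟨p + q, (natDegree_add_le p q).trans (by omega : max p.natDegree q.natDegree ≤ d),
    fun x => by simp [hep x, heq x]⟩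

lemma IsPD.sub {d : ℕ} {f g : ℤ → ℚ} (hf : IsPD d f) (hg : IsPD d g) :
    IsPD d (fun x => f x - g x) := by
  obtain ⟨p, hp, hep⟩ := hf
  obtain ⟨q, hq, heq⟩ := hg
  exact ⟨p - q, (natDegree_sub_le p q).trans (by omega : max p.natDegree q.natDegree ≤ d),
    fun x => by simp [hep x, heq x]⟩

lemma IsPD.mul {a b : ℕ} {f g : ℤ → ℚ} (hf : IsPD a f) (hg : IsPD b g) :
    IsPD (a + b) (fun x => f x * g x) := by
  obtain ⟨p, hp, hep⟩ := hf
  obtain ⟨q, hq, heq⟩ := hg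
  exact ⟨p * q, (natDegree_mul_le).trans (by omega), fun x => by simp [hep x, heq x]⟩

lemma IsPD.pow {a : ℕ} {f : ℤ → ℚ} (hf : IsPD a f) (k : ℕ) :
    IsPD (k * a) (fun x => f x ^ k) := by
  induction k with
  | zero => simpa using isPD_const 0 1
  | succ k ih =>
      have h2 := ih.mul hf
      have harith : k * a + a = (k + 1) * a := by ring
      rw [harith] at h2
      simpa only [← pow_succ] using h2

lemma IsPD.sum {d : ℕ} {s : Finset ℕ} {F : ℕ → ℤ → ℚ}
    (h : ∀ i ∈ s, IsPD d (F i)) : IsPD d (fun x => ∑ i ∈ s, F i x) := by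
  classical
  induction s using Finset.induction_on with
  | empty => simpa using isPD_const d 0
  | insert a s hni ih =>
      have h1 : IsPD d (F a) := h a (Finset.mem_insert_self a s)
      have h2 : IsPD d (fun x => ∑ i ∈ s, F i x) :=
        ih fun i hi => h i (Finset.mem_insert_of_mem hi)
      have h3 := h1.add h2
      have : (fun x => ∑ i ∈ insert a s, F i x) = fun x => F a x + ∑ i ∈ s, F i x := by
        funext x
        rw [Finset.sum_insert hni]
      rw [this]
      exact h3

lemma IsPD.comp_affine {d : ℕ} {f : ℤ → ℚ} (h : IsPD d f) (a b : ℤ) :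
    IsPD d (fun x => f (a + b * x)) := by
  obtain ⟨p, hp, hep⟩ := h
  refine ⟨p.comp (C (a : ℚ) + C (b : ℚ) * X), ?_, ?_⟩
  · refine (natDegree_comp_le).trans ?_
    have : (C (a : ℚ) + C (b : ℚ) * X).natDegree ≤ 1 := by
      refine (natDegree_add_le _ _).trans ?_
      simp only [natDegree_C, max_le_iff]
      constructor
      · omega
      · exact (natDegree_mul_le).trans (by simp)
    calc p.natDegree * (C (a : ℚ) + C (b : ℚ) * X).natDegree ≤ p.natDegree * 1 :=
          Nat.mul_le_mul_left _ this
      _ ≤ d := by omega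
  · intro x
    rw [eval_comp]
    simp only [eval_add, eval_mul, eval_C, eval_X]
    rw [hep (a + b * x)]
    push_cast
    ring

lemma isPD_chQ (b : ℕ) : IsPD b (fun x : ℤ => chQ (x : ℚ) b) := by
  refine ⟨(∏ i ∈ Finset.range b, (X - C (i : ℚ))) * C ((b.factorial : ℚ)⁻¹), ?_, ?_⟩
  · have h1 : (∏ i ∈ Finset.range b, (X - C (i : ℚ))).natDegree ≤ b := by
      refine (natDegree_prod_le _ _).trans ?_
      have h2 : ∀ i ∈ Finset.range b, (X - C (i : ℚ)).natDegree ≤ 1 :=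
        fun i _ => natDegree_X_sub_C_le _
      have h4 := Finset.sum_le_card_nsmul (Finset.range b)
        (fun i => (X - C (i : ℚ)).natDegree) 1 h2
      simpa using h4
    have h3 := natDegree_mul_le (p := ∏ i ∈ Finset.range b, (X - C (i : ℚ)))
      (q := C ((b.factorial : ℚ)⁻¹))
    simp only [natDegree_C] at h3
    omega
  · intro x
    simp only [eval_mul, eval_prod, eval_sub, eval_X, eval_C, chQ]
    rw [div_eq_mul_inv]

end BS

namespace BS

open Polynomial

lemma desc_delta (k : ℕ) (x : ℚ) :
    (descPochhammer ℚ (k + 1)).eval (x + 1) - (descPochhammer ℚ (k + 1)).eval x =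
      (k + 1) * (descPochhammer ℚ k).eval x := by
  have h1 : (descPochhammer ℚ (k + 1)).eval (x + 1) =
      (x + 1) * (descPochhammer ℚ k).eval x := by
    rw [descPochhammer_succ_left]
    simp [eval_comp]
  rw [h1, descPochhammer_succ_eval]
  ring

lemma exists_antideriv : ∀ (N : ℕ) (p : Polynomial ℚ), p.natDegree ≤ N →
    ∃ q : Polynomial ℚ, q.natDegree ≤ N + 1 ∧ ∀ x : ℚ, q.eval (x + 1) - q.eval x = p.eval x := by
  intro N
  induction N with
  | zero =>
      intro p hp
      refine ⟨C (p.coeff 0) * X, ?_, ?_⟩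
      · have := natDegree_mul_le (p := C (p.coeff 0)) (q := (X : Polynomial ℚ))
        simp only [natDegree_C, natDegree_X] at this
        omega
      · intro x
        rw [eq_C_of_natDegree_le_zero hp]
        simp
        ring
  | succ N ih =>
      intro p hp
      set c := p.coeff (N + 1) with hc
      set r := p - C c * descPochhammer ℚ (N + 1) with hr
      have hdP : (descPochhammer ℚ (N + 1)).natDegree = N + 1 :=
        descPochhammer_natDegree (R := ℚ) (N + 1)
      have hrdeg : r.natDegree ≤ N := by
        rw [natDegree_le_iff_coeff_eq_zero]
        intro i hi
        rw [hr, coeff_sub, coeff_C_mul]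
        rcases eq_or_lt_of_le (show N + 1 ≤ i by omega) with heq | hlt
        · rw [← heq]
          have hmonic : (descPochhammer ℚ (N + 1)).coeff (N + 1) = 1 := by
            have := (monic_descPochhammer ℚ (N + 1)).coeff_natDegree
            rwa [hdP] at this
          rw [hmonic, hc]
          ring
        · rw [coeff_eq_zero_of_natDegree_lt (by omega : p.natDegree < i),
            coeff_eq_zero_of_natDegree_lt (by omega : (descPochhammer ℚ (N + 1)).natDegree < i)]
          ring
      obtain ⟨q₀, hq₀deg, hq₀⟩ := ih r hrdeg
      refine ⟨q₀ + C (c / (N + 2)) * descPochhammer ℚ (N + 2), ?_, ?_⟩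
      · have h1 := natDegree_add_le q₀ (C (c / (N + 2)) * descPochhammer ℚ (N + 2))
        have h2 := natDegree_mul_le (p := C (c / (N + 2))) (q := descPochhammer ℚ (N + 2))
        have h3 : (descPochhammer ℚ (N + 2)).natDegree = N + 2 :=
          descPochhammer_natDegree (R := ℚ) (N + 2)
        simp only [natDegree_C] at h2
        omega
      · intro x
        simp only [eval_add, eval_mul, eval_C]
        have hd := desc_delta (N + 1) x
        push_cast at hd
        have hq := hq₀ x
        have hN2 : ((N : ℚ) + 2) ≠ 0 := by positivity
        have hrx : r.eval x = p.eval x - c * (descPochhammer ℚ (N + 1)).eval x := by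
          rw [hr]; simp
        have hsimp : c / ((N : ℚ) + 2) * (((N : ℚ) + 1 + 1) *
            (descPochhammer ℚ (N + 1)).eval x) = c * (descPochhammer ℚ (N + 1)).eval x := by
          rw [show ((N : ℚ) + 1 + 1) = (N : ℚ) + 2 by ring]
          field_simp
        linear_combination hq + hrx + (c / ((N : ℚ) + 2)) * hd + hsimp

lemma IsPD.cumul_fun {d : ℕ} {g : ℤ → ℚ} (h : IsPD d g) : IsPD (d + 1) (BS.cumul g) := by
  obtain ⟨p, hp, hep⟩ := h
  obtain ⟨q, hqdeg, hq⟩ := exists_antideriv d p hp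
  refine ⟨q - C (q.eval 0), ?_, ?_⟩
  · have h1 := natDegree_sub_le q (C (q.eval 0))
    simp only [natDegree_C] at h1
    omega
  · intro x
    have := funext_of_delta (f := cumul g) (g := fun x : ℤ => (q - C (q.eval 0)).eval (x : ℚ))
      ?_ ?_ x
    · exact this
    · simp [cumul_zero]
    · intro y
      rw [cumul_succ]
      simp only [eval_sub, eval_C]
      have := hq (y : ℚ)
      push_cast
      rw [hep y] at *
      push_cast at this
      linarith

lemma isPD_Pf : ∀ j : ℕ, IsPD (2 * j) (Pf j)
  | 0 => (isPD_const 0 1).mono (by omega)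
  | j + 1 => by
      have hinner : IsPD (1 + 2 * j) (fun t : ℤ => ((t : ℚ) + 1 - (j + 1)) * Pf j t) := by
        have h1 : IsPD 1 (fun t : ℤ => (t : ℚ) + 1 - ((j : ℚ) + 1)) := by
          have := isPD_X.add (isPD_const 1 (1 - ((j : ℚ) + 1)))
          have heq : (fun t : ℤ => (t : ℚ) + (1 - ((j : ℚ) + 1))) =
              fun t : ℤ => (t : ℚ) + 1 - ((j : ℚ) + 1) := by
            funext t; ring
          rwa [heq] at this
        exact h1.mul (isPD_Pf j)
      have := hinner.cumul_fun
      have heq : Pf (j + 1) = cumul (fun t : ℤ => ((t : ℚ) + 1 - (j + 1)) * Pf j t) := rfl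
      rw [heq]
      have harith : 1 + 2 * j + 1 = 2 * (j + 1) := by omega
      rwa [harith] at this

lemma IsPD.zero_of_roots {d : ℕ} {f : ℤ → ℚ} (h : IsPD d f) (S : Finset ℤ)
    (hcard : d < S.card) (hroot : ∀ y ∈ S, f y = 0) : ∀ x, f x = 0 := by
  obtain ⟨p, hp, hep⟩ := h
  have hp0 : p = 0 := by
    apply Polynomial.eq_zero_of_natDegree_lt_card_of_eval_eq_zero' p
      (S.image (fun y : ℤ => (y : ℚ)))
    · intro i hi
      simp only [Finset.mem_image] at hi
      obtain ⟨y, hy, rfl⟩ := hi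
      rw [← hep y]
      exact hroot y hy
    · rw [Finset.card_image_of_injective _ Int.cast_injective]
      omega
  intro x
  rw [hep x, hp0]
  simp

end BS

namespace BS

lemma key (n : ℕ) (y : ℤ) :
    Df n y = ∑ u ∈ Finset.range (n + 1),
      chQ ((n : ℚ) + (y : ℚ)) (n - u) * chQ ((n : ℚ) - (y : ℚ)) (n + u) * Df n (-(u : ℤ)) := by
  set F : ℤ → ℚ := fun y => Df n y - ∑ u ∈ Finset.range (n + 1),
      chQ ((n : ℚ) + (y : ℚ)) (n - u) * chQ ((n : ℚ) - (y : ℚ)) (n + u) * Df n (-(u : ℤ))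
    with hF
  have hIs : IsPD (2 * n) F := by
    apply IsPD.sub
    · -- Df n is IsPD (2n)
      apply IsPD.sum
      intro h hh
      simp only [Finset.mem_range] at hh
      have hhn : h ≤ n := by omega
      have t1 : IsPD h (fun y : ℤ => (bernoulli h : ℚ) * chQ (y : ℚ) h) := by
        have := (isPD_const 0 ((bernoulli h : ℚ))).mul (isPD_chQ h)
        simpa using this
      have t2 : IsPD (2 * (n - h)) (fun y : ℤ => Pf (n - h) (y - h)) := by
        have := (isPD_Pf (n - h)).comp_affine (-(h : ℤ)) 1
        have heq : (fun y : ℤ => Pf (n - h) (-(h : ℤ) + 1 * y)) =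
            fun y : ℤ => Pf (n - h) (y - h) := by
          funext y
          congr 1
          ring
        rwa [heq] at this
      have t3 : IsPD h (fun y : ℤ => ((y : ℚ) - n) ^ h) := by
        have base : IsPD 1 (fun y : ℤ => (y : ℚ) - (n : ℚ)) := by
          have := isPD_X.sub (isPD_const 1 ((n : ℚ)))
          simpa using this
        have := base.pow h
        simpa using this
      have := (t1.mul t2).mul t3
      exact this.mono (by omega)
    · apply IsPD.sum
      intro u hu
      simp only [Finset.mem_range] at hu
      have hun : u ≤ n := by omega
      have t1 : IsPD (n - u) (fun y : ℤ => chQ ((n : ℚ) + (y : ℚ)) (n - u)) := by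
        have := (isPD_chQ (n - u)).comp_affine (n : ℤ) 1
        have heq : (fun y : ℤ => chQ ((((n : ℤ) + 1 * y : ℤ) : ℚ)) (n - u)) =
            fun y : ℤ => chQ ((n : ℚ) + (y : ℚ)) (n - u) := by
          funext y
          congr 1
          push_cast
          ring
        rwa [heq] at this
      have t2 : IsPD (n + u) (fun y : ℤ => chQ ((n : ℚ) - (y : ℚ)) (n + u)) := by
        have := (isPD_chQ (n + u)).comp_affine (n : ℤ) (-1)
        have heq : (fun y : ℤ => chQ ((((n : ℤ) + (-1) * y : ℤ) : ℚ)) (n + u)) =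
            fun y : ℤ => chQ ((n : ℚ) - (y : ℚ)) (n + u) := by
          funext y
          congr 1
          push_cast
          ring
        rwa [heq] at this
      have t3 : IsPD 0 (fun _ : ℤ => Df n (-(u : ℤ))) := isPD_const 0 _
      have := (t1.mul t2).mul t3
      exact this.mono (by omega)
  have hroots : ∀ z ∈ Finset.Icc (-(n : ℤ)) (n : ℤ), F z = 0 := by
    intro z hz
    simp only [Finset.mem_Icc] at hz
    rw [hF]
    simp only
    rcases le_or_gt z 0 with hz0 | hz0
    · obtain ⟨u₀, rfl, hle⟩ : ∃ u₀ : ℕ, z = -(u₀ : ℤ) ∧ u₀ ≤ n :=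
        ⟨(-z).toNat, by omega, by omega⟩
      rw [Finset.sum_eq_single u₀]
      · have e1 : chQ ((n : ℚ) + ((-(u₀ : ℤ) : ℤ) : ℚ)) (n - u₀) = 1 := by
          have harg : (n : ℚ) + ((-(u₀ : ℤ) : ℤ) : ℚ) = ((n - u₀ : ℕ) : ℚ) := by
            push_cast [Nat.cast_sub hle]
            ring
          rw [harg, chQ_nat, Nat.choose_self]
          norm_num
        have e2 : chQ ((n : ℚ) - ((-(u₀ : ℤ) : ℤ) : ℚ)) (n + u₀) = 1 := by
          have harg : (n : ℚ) - ((-(u₀ : ℤ) : ℤ) : ℚ) = ((n + u₀ : ℕ) : ℚ) := by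
            push_cast
            ring
          rw [harg, chQ_nat, Nat.choose_self]
          norm_num
        rw [e1, e2]
        ring
      · intro v hv hne
        simp only [Finset.mem_range] at hv
        rcases lt_or_gt_of_ne hne with hlt | hgt
        · -- v < u₀ : first factor vanishes
          have harg : (n : ℚ) + ((-(u₀ : ℤ) : ℤ) : ℚ) = ((n - u₀ : ℕ) : ℚ) := by
            push_cast [Nat.cast_sub hle]
            ring
          rw [harg, chQ_nat, Nat.choose_eq_zero_of_lt (by omega : n - u₀ < n - v)]
          push_cast
          ring
        · -- v > u₀ : second factor vanishes
          have harg : (n : ℚ) - ((-(u₀ : ℤ) : ℤ) : ℚ) = ((n + u₀ : ℕ) : ℚ) := by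
            push_cast
            ring
          rw [harg, chQ_nat, Nat.choose_eq_zero_of_lt (by omega : n + u₀ < n + v)]
          push_cast
          ring
      · intro habs
        exact absurd (Finset.mem_range.2 (by omega)) habs
    · obtain ⟨m, rfl, h1m, hmn⟩ : ∃ m : ℕ, z = (m : ℤ) ∧ 1 ≤ m ∧ m ≤ n :=
        ⟨z.toNat, by omega, by omega, by omega⟩
      rw [Df_root n m h1m hmn, Finset.sum_eq_zero]
      · ring
      · intro u hu
        have harg : (n : ℚ) - (((m : ℤ) : ℤ) : ℚ) = ((n - m : ℕ) : ℚ) := by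
          push_cast [Nat.cast_sub hmn]
          ring
        rw [harg, chQ_nat, Nat.choose_eq_zero_of_lt (by omega : n - m < n + u)]
        push_cast
        ring
  have hcard : 2 * n < (Finset.Icc (-(n : ℤ)) (n : ℤ)).card := by
    rw [Int.card_Icc]
    omega
  have hzero := hIs.zero_of_roots _ hcard hroots y
  rw [hF] at hzero
  simp only at hzero
  linarith

end BS


theorem bsB_eq_sum_bsA (n x : ℕ) (hx : n ≤ x) :
    bsB x (x - n) =
      ∑ u ∈ Finset.range (n + 1),
        intChoose ((n : ℤ) + x) (n - u) * intChoose ((n : ℤ) - x) (n + u) * bsA (n + u) u := by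

  have hk := BS.key n (x : ℤ)
  rw [BS.Df_nat n x hx] at hk
  rw [hk]
  apply Finset.sum_congr rfl
  intro u hu
  simp only [Finset.mem_range] at hu
  rw [BS.Df_neg n u]
  congr 1
  congr 1
  · rw [BS.intChoose_eq_chQ]
    congr 1
    push_cast
    ring
  · rw [BS.intChoose_eq_chQ]
    congr 1
    push_cast
    ring
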